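/- Let T be an invertible measure-preserving ergodic transformation of a σ-finite infinite measure space. Then there exists a measurable set A of positive measure such that for every n ∈ ℕ there exists ℓ > 0 with μ(T^{kℓ + j} A ∩ A) = 0 for all k = 1, …, n and all j with |j| ≤ n. -/

import Mathlib

open MeasureTheory Filter Finset
open scoped ENNReal RealInnerProductSpace Topology

set_option maxHeartbeats 1000000
set_option synthInstance.maxHeartbeats 400000

section AuxGaps

variable {X : Type*} [MeasurableSpace X] {μ : Measure X}

lemma mp_pow (e : Equiv.Perm X) (hT : MeasurePreserving e μ μ) (m : ℕ) :
    MeasurePreserving (⇑(e ^ m)) μ μ := by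
  induction m with
  | zero => simpa using MeasurePreserving.id μ
  | succ n ih =>
      have h1 : (e ^ (n + 1) : Equiv.Perm X) = e ^ n * e := pow_succ e n
      have h2 : ⇑(e ^ n * e) = ⇑(e ^ n) ∘ ⇑e := rfl
      rw [h1, h2]
      exact ih.comp hT

lemma mp_zpow (e : Equiv.Perm X) (hT : MeasurePreserving e μ μ)
    (hT' : MeasurePreserving e.symm μ μ) (m : ℤ) :
    MeasurePreserving (⇑(e ^ m)) μ μ := by
  cases m with
  | ofNat n =>
      rw [Int.ofNat_eq_coe, zpow_natCast]
      exact mp_pow e hT n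
  | negSucc n =>
      rw [zpow_negSucc, ← inv_pow]
      have h2 : (e⁻¹ : Equiv.Perm X) = e.symm := rfl
      rw [h2]
      exact mp_pow e.symm hT' (n + 1)

private lemma ind_congr {p : ℝ≥0∞} {s t : Set X} (h : s = t) (hs : MeasurableSet s)
    (ht : MeasurableSet t) (hμs : μ s ≠ ∞) (hμt : μ t ≠ ∞) (c : ℝ) :
    indicatorConstLp p hs hμs c = indicatorConstLp p ht hμt c := by
  subst h; rfl

lemma cesaro (μ : Measure X) (hinf : μ Set.univ = ⊤) (e : Equiv.Perm X)
    (hT : MeasurePreserving e μ μ) (herg : Ergodic e μ)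
    {W : Set X} (hW : MeasurableSet W) (hfin : μ W ≠ ∞) :
    Tendsto (fun N : ℕ => (N : ℝ)⁻¹ * ∑ m ∈ Finset.range N,
      (μ ((⇑(e ^ m)) ⁻¹' W ∩ W)).toReal) atTop (𝓝 0) := by
  haveI : Fact ((1 : ℝ≥0∞) ≤ 2) := fact_one_le_two_ennreal
  have hμ0 : μ ≠ 0 := by
    intro h
    rw [h] at hinf
    simp at hinf
  set U : Lp ℝ 2 μ →ₗᵢ[ℝ] Lp ℝ 2 μ := Lp.compMeasurePreservingₗᵢ ℝ ⇑e hT with hU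
  set Uc : Lp ℝ 2 μ →L[ℝ] Lp ℝ 2 μ := U.toContinuousLinearMap with hUcdef
  have hUc1 : ‖Uc‖ ≤ 1 := U.norm_toContinuousLinearMap_le
  have hUapp : ∀ g : Lp ℝ 2 μ, Uc g = Lp.compMeasurePreserving (⇑e) hT g := fun g => rfl
  -- fixed vectors are zero
  have hfix : ∀ g : Lp ℝ 2 μ, Uc g = g → g = 0 := by
    intro g hg
    have h1 : ⇑(Uc g) =ᵐ[μ] ⇑g ∘ ⇑e := by
      rw [hUapp]
      exact Lp.coeFn_compMeasurePreserving g hT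
    rw [hg] at h1
    obtain ⟨c, hc⟩ := (herg.quasiErgodic).ae_eq_const_of_ae_eq_comp₀
      ((Lp.aestronglyMeasurable g).aemeasurable.nullMeasurable) h1.symm
    rcases eq_or_ne c 0 with rfl | hc0
    · exact Lp.eq_zero_iff_ae_eq_zero.2 hc
    · exfalso
      have h2 : eLpNorm (⇑g) 2 μ < ∞ := Lp.eLpNorm_lt_top g
      have h3 : eLpNorm (⇑g) 2 μ = eLpNorm (fun _ : X => c) 2 μ := eLpNorm_congr_ae hc
      rw [eLpNorm_const c (by norm_num) hμ0, hinf] at h3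
      have h4 : (⊤ : ℝ≥0∞) ^ (1 / (2 : ℝ≥0∞).toReal) = ⊤ := by
        rw [ENNReal.top_rpow_of_pos (by norm_num)]
      rw [h4, ENNReal.mul_top (by simpa using hc0)] at h3
      rw [h3] at h2
      exact (lt_irrefl _ h2).elim
  -- the indicator function
  set F : Lp ℝ 2 μ := indicatorConstLp 2 hW hfin (1 : ℝ) with hF
  have hmet := Uc.tendsto_birkhoffAverage_orthogonalProjection hUc1 F
  have hproj : ((Submodule.orthogonalProjectionOnto (Uc.eqLocus (1 : Lp ℝ 2 μ →L[ℝ] Lp ℝ 2 μ)) F :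
      ↥(Uc.eqLocus (1 : Lp ℝ 2 μ →L[ℝ] Lp ℝ 2 μ))) : Lp ℝ 2 μ) = 0 := by
    apply hfix
    have hmem := (Submodule.orthogonalProjectionOnto (Uc.eqLocus (1 : Lp ℝ 2 μ →L[ℝ] Lp ℝ 2 μ)) F).2
    rw [LinearMap.mem_eqLocus] at hmem
    simpa using hmem
  rw [hproj] at hmet
  -- compute iterates
  have hsm : ∀ m : ℕ, MeasurableSet ((⇑(e ^ m)) ⁻¹' W) :=
    fun m => hW.preimage (mp_pow e hT m).measurable
  have hsf : ∀ m : ℕ, μ ((⇑(e ^ m)) ⁻¹' W) ≠ ∞ := by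
    intro m
    rw [(mp_pow e hT m).measure_preimage hW.nullMeasurableSet]
    exact hfin
  have hiter : ∀ m : ℕ, (⇑Uc)^[m] F = indicatorConstLp 2 (hsm m) (hsf m) (1 : ℝ) := by
    intro m
    induction m with
    | zero =>
        simp only [Function.iterate_zero, id_eq]
        exact ind_congr (by simp) _ _ _ _ _
    | succ n ih =>
        rw [Function.iterate_succ_apply', ih]
        rw [hUapp, Lp.indicatorConstLp_compMeasurePreserving]
        exact ind_congr (by rw [pow_succ]; rfl) _ _ _ _ _
  -- inner products
  have hinner : ∀ m : ℕ, ⟪F, (⇑Uc)^[m] F⟫ = (μ ((⇑(e ^ m)) ⁻¹' W ∩ W)).toReal := by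
    intro m
    rw [hiter m, hF]
    rw [L2.inner_indicatorConstLp_one hW hfin]
    rw [setIntegral_indicatorConstLp hW (hsm m) (hsf m) 1]
    simp
    rfl
  have hseq : ∀ N : ℕ, ⟪F, birkhoffAverage ℝ (⇑Uc) _root_.id N F⟫ =
      (N : ℝ)⁻¹ * ∑ m ∈ Finset.range N, (μ ((⇑(e ^ m)) ⁻¹' W ∩ W)).toReal := by
    intro N
    rw [birkhoffAverage, real_inner_smul_right]
    congr 1
    rw [birkhoffSum, inner_sum]
    exact Finset.sum_congr rfl fun m _ => by simpa using hinner m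
  have h0 : Tendsto (fun N : ℕ => ⟪F, birkhoffAverage ℝ (⇑Uc) _root_.id N F⟫)
      atTop (𝓝 (0 : ℝ)) := by
    have := Filter.Tendsto.inner (𝕜 := ℝ) (tendsto_const_nhds (x := F)) hmet
    simpa using this
  exact h0.congr hseq

lemma select (μ : Measure X) (hinf : μ Set.univ = ⊤) (e : Equiv.Perm X)
    (hT : MeasurePreserving e μ μ) (herg : Ergodic e μ)
    {W : Set X} (hW : MeasurableSet W) (hfin : μ W ≠ ∞) (n : ℕ) (hn : 1 ≤ n)
    {ε : ℝ} (hε : 0 < ε) :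
    ∃ ℓ : ℤ, (n : ℤ) < ℓ ∧
      ∑ k ∈ Finset.Icc (1 : ℤ) (n : ℤ), ∑ j ∈ Finset.Icc (-(n : ℤ)) (n : ℤ),
        (μ ((⇑(e ^ (k * ℓ + j))) ⁻¹' W ∩ W)).toReal < ε := by
  set φ : ℕ → ℝ := fun m => (μ ((⇑(e ^ m)) ⁻¹' W ∩ W)).toReal with hφ
  have hφ0 : ∀ m, 0 ≤ φ m := fun m => ENNReal.toReal_nonneg
  have hzpow : ∀ m : ℤ, 0 ≤ m →
      (μ ((⇑(e ^ m)) ⁻¹' W ∩ W)).toReal = φ m.toNat := by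
    intro m hm
    have h1 : (e : Equiv.Perm X) ^ m = e ^ m.toNat := by
      rw [← zpow_natCast, Int.toNat_of_nonneg hm]
    rw [h1]
  -- parameters
  set D : ℝ := (n : ℝ) * (2 * n + 1) * ((n : ℝ) + 1) ^ 2 + 1 with hD
  have hD1 : (1 : ℝ) ≤ D := by
    have : 0 ≤ (n : ℝ) * (2 * n + 1) * ((n : ℝ) + 1) ^ 2 := by positivity
    linarith
  have hDpos : 0 < D := by linarith
  set η : ℝ := ε / D with hη
  have hηpos : 0 < η := div_pos hε hDpos
  obtain ⟨N₀, hN₀⟩ : ∃ N₀ : ℕ, ∀ N ≥ N₀, (N : ℝ)⁻¹ * ∑ m ∈ range N, φ m < η :=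
    eventually_atTop.1 ((cesaro μ hinf e hT herg hW hfin).eventually_lt_const hηpos)
  set L : ℕ := max N₀ (n * n + n + 1) with hL
  have hL1 : 1 ≤ L := le_trans (by omega) (le_max_right _ _)
  set N : ℕ := n * (n + L) + n + 1 with hN
  have hLN : L ≤ N := by
    have : 1 * (0 + L) ≤ n * (n + L) := by
      apply Nat.mul_le_mul hn
      omega
    omega
  have hSN : ∑ m ∈ range N, φ m < η * N := by
    have h := hN₀ N (le_trans (le_max_left _ _) hLN)
    have hNpos : 0 < (N : ℝ) := by
      have : 0 < N := by omega
      exact_mod_cast this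
    calc ∑ m ∈ range N, φ m = (N : ℝ) * ((N : ℝ)⁻¹ * ∑ m ∈ range N, φ m) := by
          field_simp
      _ < (N : ℝ) * η := by
          apply mul_lt_mul_of_pos_left h hNpos
      _ = η * N := by ring
  by_contra hcon
  push_neg at hcon
  -- every ℓ in the window has large sum
  have hbig : ∀ ℓ ∈ Finset.Icc ((n : ℤ) + 1) ((n : ℤ) + L), ε ≤
      ∑ k ∈ Finset.Icc (1 : ℤ) (n : ℤ), ∑ j ∈ Finset.Icc (-(n : ℤ)) (n : ℤ),
        (μ ((⇑(e ^ (k * ℓ + j))) ⁻¹' W ∩ W)).toReal := by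
    intro ℓ hℓ
    rw [Finset.mem_Icc] at hℓ
    exact hcon ℓ (by omega)
  have hcard : (Finset.Icc ((n : ℤ) + 1) ((n : ℤ) + L)).card = L := by
    rw [Int.card_Icc]
    omega
  have key : (L : ℝ) * ε ≤
      ∑ ℓ ∈ Finset.Icc ((n : ℤ) + 1) ((n : ℤ) + L),
        ∑ k ∈ Finset.Icc (1 : ℤ) (n : ℤ), ∑ j ∈ Finset.Icc (-(n : ℤ)) (n : ℤ),
          (μ ((⇑(e ^ (k * ℓ + j))) ⁻¹' W ∩ W)).toReal := by
    have := Finset.card_nsmul_le_sum (Finset.Icc ((n : ℤ) + 1) ((n : ℤ) + L)) _ ε hbig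
    rw [hcard] at this
    simpa [nsmul_eq_mul] using this
  -- bound the double sum
  have bound : ∑ ℓ ∈ Finset.Icc ((n : ℤ) + 1) ((n : ℤ) + L),
        ∑ k ∈ Finset.Icc (1 : ℤ) (n : ℤ), ∑ j ∈ Finset.Icc (-(n : ℤ)) (n : ℤ),
          (μ ((⇑(e ^ (k * ℓ + j))) ⁻¹' W ∩ W)).toReal ≤
      ((n : ℝ) * (2 * n + 1)) * ∑ m ∈ range N, φ m := by
    rw [Finset.sum_comm]
    have hstep : ∀ k ∈ Finset.Icc (1 : ℤ) (n : ℤ),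
        ∑ ℓ ∈ Finset.Icc ((n : ℤ) + 1) ((n : ℤ) + L),
          ∑ j ∈ Finset.Icc (-(n : ℤ)) (n : ℤ),
            (μ ((⇑(e ^ (k * ℓ + j))) ⁻¹' W ∩ W)).toReal ≤
        ((2 * n + 1 : ℕ) : ℝ) * ∑ m ∈ range N, φ m := by
      intro k hk
      rw [Finset.mem_Icc] at hk
      rw [Finset.sum_comm]
      have hstep2 : ∀ j ∈ Finset.Icc (-(n : ℤ)) (n : ℤ),
          ∑ ℓ ∈ Finset.Icc ((n : ℤ) + 1) ((n : ℤ) + L),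
            (μ ((⇑(e ^ (k * ℓ + j))) ⁻¹' W ∩ W)).toReal ≤ ∑ m ∈ range N, φ m := by
        intro j hj
        rw [Finset.mem_Icc] at hj
        -- nonnegativity of exponents and bounds
        have hexp : ∀ ℓ ∈ Finset.Icc ((n : ℤ) + 1) ((n : ℤ) + L), 0 ≤ k * ℓ + j ∧
            (k * ℓ + j).toNat < N := by
          intro ℓ hℓ
          rw [Finset.mem_Icc] at hℓ
          have hkl1 : ℓ ≤ k * ℓ := le_mul_of_one_le_left (by omega) hk.1
          have hkl2 : k * ℓ ≤ (n : ℤ) * ((n : ℤ) + L) := by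
            apply mul_le_mul hk.2 hℓ.2 (by omega) (by omega)
          have hNZ : ((N : ℤ)) = (n : ℤ) * ((n : ℤ) + L) + n + 1 := by
            rw [hN]
            push_cast
            ring
          constructor
          · omega
          · omega
        calc ∑ ℓ ∈ Finset.Icc ((n : ℤ) + 1) ((n : ℤ) + L),
              (μ ((⇑(e ^ (k * ℓ + j))) ⁻¹' W ∩ W)).toReal
            = ∑ ℓ ∈ Finset.Icc ((n : ℤ) + 1) ((n : ℤ) + L), φ ((k * ℓ + j).toNat) := by
              apply Finset.sum_congr rfl
              intro ℓ hℓ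
              exact hzpow _ (hexp ℓ hℓ).1
          _ = ∑ m ∈ (Finset.Icc ((n : ℤ) + 1) ((n : ℤ) + L)).image
                (fun ℓ => (k * ℓ + j).toNat), φ m := by
              rw [Finset.sum_image]
              intro ℓ₁ h₁ ℓ₂ h₂ heq
              have e₁ := (hexp ℓ₁ h₁).1
              have e₂ := (hexp ℓ₂ h₂).1
              have : k * ℓ₁ + j = k * ℓ₂ + j := by simp only at heq; omega
              have hk0 : k ≠ 0 := by omega
              have : k * ℓ₁ = k * ℓ₂ := by omega
              exact mul_left_cancel₀ hk0 this
          _ ≤ ∑ m ∈ range N, φ m := by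
              apply Finset.sum_le_sum_of_subset_of_nonneg
              · intro m hm
                rw [Finset.mem_image] at hm
                obtain ⟨ℓ, hℓ, rfl⟩ := hm
                rw [Finset.mem_range]
                exact (hexp ℓ hℓ).2
              · intro i _ _
                exact hφ0 i
      calc ∑ j ∈ Finset.Icc (-(n : ℤ)) (n : ℤ),
            ∑ ℓ ∈ Finset.Icc ((n : ℤ) + 1) ((n : ℤ) + L),
              (μ ((⇑(e ^ (k * ℓ + j))) ⁻¹' W ∩ W)).toReal
          ≤ ∑ _j ∈ Finset.Icc (-(n : ℤ)) (n : ℤ), ∑ m ∈ range N, φ m :=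
            Finset.sum_le_sum hstep2
        _ = ((2 * n + 1 : ℕ) : ℝ) * ∑ m ∈ range N, φ m := by
            rw [Finset.sum_const, Int.card_Icc]
            rw [nsmul_eq_mul]
            congr 2
            omega
    calc ∑ k ∈ Finset.Icc (1 : ℤ) (n : ℤ),
          ∑ ℓ ∈ Finset.Icc ((n : ℤ) + 1) ((n : ℤ) + L),
            ∑ j ∈ Finset.Icc (-(n : ℤ)) (n : ℤ),
              (μ ((⇑(e ^ (k * ℓ + j))) ⁻¹' W ∩ W)).toReal
        ≤ ∑ _k ∈ Finset.Icc (1 : ℤ) (n : ℤ), ((2 * n + 1 : ℕ) : ℝ) * ∑ m ∈ range N, φ m :=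
          Finset.sum_le_sum hstep
      _ = ((n : ℝ) * (2 * n + 1)) * ∑ m ∈ range N, φ m := by
          rw [Finset.sum_const, Int.card_Icc, nsmul_eq_mul]
          have : ((n : ℤ) + 1 - 1).toNat = n := by omega
          rw [this]
          push_cast
          ring
  -- final arithmetic contradiction
  have hNle : (N : ℝ) ≤ ((n : ℝ) + 1) ^ 2 * L := by
    have h1 : N ≤ (n + 1) * (n + 1) * L := by
      have h2 : n * n + n + 1 ≤ L := le_max_right _ _
      calc N = n * n + n + 1 + n * L := by rw [hN]; ring
        _ ≤ L + n * L := by omega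
        _ = (n + 1) * L := by ring
        _ ≤ (n + 1) * (n + 1) * L := by
            have : (1:ℕ) ≤ n + 1 := by omega
            nlinarith
    calc (N : ℝ) ≤ ((n : ℝ) + 1) * ((n : ℝ) + 1) * L := by exact_mod_cast h1
      _ = ((n : ℝ) + 1) ^ 2 * L := by ring
  have hS0 : 0 ≤ ∑ m ∈ range N, φ m := Finset.sum_nonneg fun i _ => hφ0 i
  have hLpos : (0 : ℝ) < L := by exact_mod_cast hL1
  have hfinal : (L : ℝ) * ε < (L : ℝ) * ε := by
    calc (L : ℝ) * ε ≤ ((n : ℝ) * (2 * n + 1)) * ∑ m ∈ range N, φ m := le_trans key bound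
      _ ≤ ((n : ℝ) * (2 * n + 1)) * (η * N) := by
          apply mul_le_mul_of_nonneg_left hSN.le (by positivity)
      _ ≤ ((n : ℝ) * (2 * n + 1)) * (η * (((n : ℝ) + 1) ^ 2 * L)) := by
          apply mul_le_mul_of_nonneg_left _ (by positivity)
          apply mul_le_mul_of_nonneg_left hNle hηpos.le
      _ = ((D - 1) * η) * L := by rw [hD]; ring
      _ < ε * L := by
          apply mul_lt_mul_of_pos_right _ hLpos
          rw [hη]
          calc (D - 1) * (ε / D) = ε * ((D - 1) / D) := by ring
            _ < ε * 1 := by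
                apply mul_lt_mul_of_pos_left _ hε
                rw [div_lt_one hDpos]
                linarith
            _ = ε := mul_one ε
      _ = (L : ℝ) * ε := by ring
  exact lt_irrefl _ hfinal

lemma step (μ : Measure X) (hinf : μ Set.univ = ⊤) (e : Equiv.Perm X)
    (hT : MeasurePreserving e μ μ) (hT' : MeasurePreserving e.symm μ μ)
    (herg : Ergodic e μ)
    {W : Set X} (hW : MeasurableSet W) (hfin : μ W ≠ ∞) (n : ℕ) (hn : 1 ≤ n)
    {ε : ℝ} (hε : 0 < ε) :
    ∃ (W' : Set X) (ℓ : ℤ), (MeasurableSet W' ∧ W' ⊆ W) ∧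
      μ (W \ W') < ENNReal.ofReal ε ∧ 0 < ℓ ∧
      ∀ k : ℤ, 1 ≤ k → k ≤ (n : ℤ) → ∀ j : ℤ, |j| ≤ (n : ℤ) →
        ∀ x ∈ W', (e ^ (k * ℓ + j)) x ∉ W' := by
  obtain ⟨ℓ, hℓ, hsum⟩ := select μ hinf e hT herg hW hfin n hn hε
  set U : Set X := ⋃ k ∈ Finset.Icc (1 : ℤ) (n : ℤ), ⋃ j ∈ Finset.Icc (-(n : ℤ)) (n : ℤ),
    (⇑(e ^ (k * ℓ + j))) ⁻¹' W with hU
  have hUmeas : MeasurableSet U := by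
    apply MeasurableSet.biUnion ((Finset.Icc (1 : ℤ) (n : ℤ)).countable_toSet)
    intro k _
    apply MeasurableSet.biUnion ((Finset.Icc (-(n : ℤ)) (n : ℤ)).countable_toSet)
    intro j _
    exact hW.preimage (mp_zpow e hT hT' _).measurable
  refine ⟨W \ U, ℓ, ⟨hW.diff hUmeas, Set.diff_subset⟩, ?_, by omega, ?_⟩
  · -- measure bound
    have hsub : W \ (W \ U) ⊆ ⋃ k ∈ Finset.Icc (1 : ℤ) (n : ℤ),
        ⋃ j ∈ Finset.Icc (-(n : ℤ)) (n : ℤ), ((⇑(e ^ (k * ℓ + j))) ⁻¹' W ∩ W) := by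
      intro x hx
      obtain ⟨hxW, hxU⟩ : x ∈ W ∧ x ∈ U := by
        rcases hx with ⟨h1, h2⟩
        refine ⟨h1, ?_⟩
        by_contra h3
        exact h2 ⟨h1, h3⟩
      rw [hU, Set.mem_iUnion₂] at hxU
      obtain ⟨k, hk, hxk⟩ := hxU
      rw [Set.mem_iUnion₂] at hxk
      obtain ⟨j, hj, hxj⟩ := hxk
      rw [Set.mem_iUnion₂]
      refine ⟨k, hk, ?_⟩
      rw [Set.mem_iUnion₂]
      exact ⟨j, hj, hxj, hxW⟩
    have h1 : μ (W \ (W \ U)) ≤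
        ∑ k ∈ Finset.Icc (1 : ℤ) (n : ℤ), ∑ j ∈ Finset.Icc (-(n : ℤ)) (n : ℤ),
          μ ((⇑(e ^ (k * ℓ + j))) ⁻¹' W ∩ W) := by
      refine le_trans (measure_mono hsub) ?_
      refine le_trans (measure_biUnion_finset_le _ _) ?_
      apply Finset.sum_le_sum
      intro k _
      exact measure_biUnion_finset_le _ _
    refine lt_of_le_of_lt h1 ?_
    have hne : ∀ k ∈ Finset.Icc (1 : ℤ) (n : ℤ), ∀ j ∈ Finset.Icc (-(n : ℤ)) (n : ℤ),
        μ ((⇑(e ^ (k * ℓ + j))) ⁻¹' W ∩ W) ≠ ∞ := by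
      intro k _ j _
      exact (lt_of_le_of_lt (measure_mono Set.inter_subset_right)
        (lt_top_iff_ne_top.2 hfin)).ne
    have hsne : (∑ k ∈ Finset.Icc (1 : ℤ) (n : ℤ), ∑ j ∈ Finset.Icc (-(n : ℤ)) (n : ℤ),
        μ ((⇑(e ^ (k * ℓ + j))) ⁻¹' W ∩ W)) ≠ ∞ := by
      rw [← lt_top_iff_ne_top]
      apply ENNReal.sum_lt_top.2
      intro k hk
      apply ENNReal.sum_lt_top.2
      intro j hj
      exact lt_top_iff_ne_top.2 (hne k hk j hj)
    rw [← ENNReal.ofReal_toReal hsne]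
    rw [ENNReal.ofReal_lt_ofReal_iff hε]
    calc (∑ k ∈ Finset.Icc (1 : ℤ) (n : ℤ), ∑ j ∈ Finset.Icc (-(n : ℤ)) (n : ℤ),
            μ ((⇑(e ^ (k * ℓ + j))) ⁻¹' W ∩ W)).toReal
        = ∑ k ∈ Finset.Icc (1 : ℤ) (n : ℤ), (∑ j ∈ Finset.Icc (-(n : ℤ)) (n : ℤ),
            μ ((⇑(e ^ (k * ℓ + j))) ⁻¹' W ∩ W)).toReal := by
          apply ENNReal.toReal_sum
          intro k hk
          rw [← lt_top_iff_ne_top]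
          apply ENNReal.sum_lt_top.2
          intro j hj
          exact lt_top_iff_ne_top.2 (hne k hk j hj)
      _ = ∑ k ∈ Finset.Icc (1 : ℤ) (n : ℤ), ∑ j ∈ Finset.Icc (-(n : ℤ)) (n : ℤ),
            (μ ((⇑(e ^ (k * ℓ + j))) ⁻¹' W ∩ W)).toReal := by
          apply Finset.sum_congr rfl
          intro k hk
          exact ENNReal.toReal_sum (hne k hk)
      _ < ε := hsum
  · -- the gap property
    intro k hk1 hk2 j hj x hx hx'
    have hxW : x ∈ (⇑(e ^ (k * ℓ + j))) ⁻¹' W := by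
      exact Set.mem_preimage.2 (hx'.1)
    apply hx.2
    rw [hU, Set.mem_iUnion₂]
    refine ⟨k, Finset.mem_Icc.2 ⟨hk1, hk2⟩, ?_⟩
    rw [Set.mem_iUnion₂]
    have habs := abs_le.1 hj
    exact ⟨j, Finset.mem_Icc.2 ⟨habs.1, habs.2⟩, hxW⟩

end AuxGaps

open MeasureTheory

theorem exists_set_with_multiple_gaps
    {X : Type*} [MeasurableSpace X] (μ : Measure X) [SigmaFinite μ]
    (hinf : μ Set.univ = ⊤) (e : Equiv.Perm X)
    (hT : MeasurePreserving e μ μ) (hT' : MeasurePreserving e.symm μ μ)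
    (herg : Ergodic e μ) :
    ∃ A : Set X, MeasurableSet A ∧ 0 < μ A ∧
      ∀ n : ℕ, ∃ ℓ : ℤ, 0 < ℓ ∧
        ∀ k : ℤ, 1 ≤ k → k ≤ n → ∀ j : ℤ, |j| ≤ n →
          μ (⇑(e ^ (k * ℓ + j)) '' A ∩ A) = 0 := by
  classical
  -- a set of positive finite measure
  obtain ⟨W₀, hW₀m, hW₀pos, hW₀fin⟩ :
      ∃ s : Set X, MeasurableSet s ∧ 0 < μ s ∧ μ s < ∞ := by
    by_contra h
    push_neg at h
    have hz : ∀ m : ℕ, μ (spanningSets μ m) = 0 := by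
      intro m
      by_contra hm
      have h1 := h (spanningSets μ m) (measurableSet_spanningSets μ m)
        (pos_iff_ne_zero.2 hm)
      exact absurd (measure_spanningSets_lt_top μ m) (not_lt.2 h1)
    have : μ Set.univ = 0 := by
      rw [← iUnion_spanningSets μ]
      exact measure_iUnion_null hz
    rw [hinf] at this
    simp at this
  set c : ℝ := (μ W₀).toReal with hc
  have hcpos : 0 < c := ENNReal.toReal_pos hW₀pos.ne' hW₀fin.ne
  -- the inductive step,packaged
  have key : ∀ (n : ℕ) (S : Set X), MeasurableSet S → S ⊆ W₀ →
      ∃ (T : Set X) (ℓ : ℤ), (MeasurableSet T ∧ T ⊆ S) ∧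
        μ (S \ T) < ENNReal.ofReal (c / 2 ^ (n + 2)) ∧ 0 < ℓ ∧
        ∀ k : ℤ, 1 ≤ k → k ≤ ((n + 1 : ℕ) : ℤ) → ∀ j : ℤ, |j| ≤ ((n + 1 : ℕ) : ℤ) →
          ∀ x ∈ T, (e ^ (k * ℓ + j)) x ∉ T := by
    intro n S hS hsub
    have hfin : μ S ≠ ∞ := (lt_of_le_of_lt (measure_mono hsub) hW₀fin).ne
    exact step μ hinf e hT hT' herg hS hfin (n + 1) (by omega)
      (by positivity)
  choose! Tf Lf h1 h2 h3 h4 using key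
  -- the recursive sequence
  let Wseq : ℕ → Set X := fun n => Nat.rec W₀ (fun m S => Tf m S) n
  have hsucc : ∀ n, Wseq (n + 1) = Tf n (Wseq n) := fun n => rfl
  have hW0 : Wseq 0 = W₀ := rfl
  have hbasic : ∀ n, MeasurableSet (Wseq n) ∧ Wseq n ⊆ W₀ := by
    intro n
    induction n with
    | zero => exact ⟨hW₀m, subset_rfl⟩
    | succ m ih =>
        have h := h1 m (Wseq m) ih.1 ih.2
        exact ⟨h.1, h.2.trans ih.2⟩
  have hmono : ∀ n, Wseq (n + 1) ⊆ Wseq n := by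
    intro n
    have h := h1 n (Wseq n) (hbasic n).1 (hbasic n).2
    exact h.2
  -- the final set
  set A : Set X := ⋂ n, Wseq n with hA
  have hAm : MeasurableSet A := MeasurableSet.iInter fun n => (hbasic n).1
  have hAsub : ∀ n, A ⊆ Wseq n := fun n => Set.iInter_subset _ n
  -- measure estimates
  have hloss : ∀ n, μ (W₀ \ Wseq n) ≤ ENNReal.ofReal (∑ i ∈ range n, c / 2 ^ (i + 2)) := by
    intro n
    induction n with
    | zero =>
        simp [hW0]
    | succ m ih =>
        have hstep := h2 m (Wseq m) (hbasic m).1 (hbasic m).2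
        have hincl : W₀ \ Wseq (m + 1) ⊆ (W₀ \ Wseq m) ∪ (Wseq m \ Wseq (m + 1)) := by
          intro x hx
          rcases Classical.em (x ∈ Wseq m) with hxm | hxm
          · exact Or.inr ⟨hxm, hx.2⟩
          · exact Or.inl ⟨hx.1, hxm⟩
        calc μ (W₀ \ Wseq (m + 1)) ≤ μ ((W₀ \ Wseq m) ∪ (Wseq m \ Wseq (m + 1))) :=
              measure_mono hincl
          _ ≤ μ (W₀ \ Wseq m) + μ (Wseq m \ Wseq (m + 1)) := measure_union_le _ _
          _ ≤ ENNReal.ofReal (∑ i ∈ range m, c / 2 ^ (i + 2)) +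
              ENNReal.ofReal (c / 2 ^ (m + 2)) := by
              exact add_le_add ih hstep.le
          _ = ENNReal.ofReal (∑ i ∈ range (m + 1), c / 2 ^ (i + 2)) := by
              rw [← ENNReal.ofReal_add (by positivity) (by positivity)]
              rw [Finset.sum_range_succ]
          _ ≤ ENNReal.ofReal (∑ i ∈ range (m + 1), c / 2 ^ (i + 2)) := le_rfl
  have hsumhalf : ∀ n, (∑ i ∈ range n, c / 2 ^ (i + 2)) ≤ c / 2 := by
    intro n
    have h1' : ∑ i ∈ range n, c / 2 ^ (i + 2) = (c / 4) * ∑ i ∈ range n, (1 / 2 : ℝ) ^ i := by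
      rw [Finset.mul_sum]
      apply Finset.sum_congr rfl
      intro i _
      have hp : (1 / 2 : ℝ) ^ i = 1 / 2 ^ i := by
        rw [div_pow, one_pow]
      rw [pow_add, hp]
      ring
    rw [h1']
    have h2' := sum_geometric_two_le n
    calc (c / 4) * ∑ i ∈ range n, (1 / 2 : ℝ) ^ i ≤ (c / 4) * 2 := by
          apply mul_le_mul_of_nonneg_left h2' (by positivity)
      _ = c / 2 := by ring
  have hlossA : μ (W₀ \ A) ≤ ENNReal.ofReal (c / 2) := by
    have hun : W₀ \ A = ⋃ n, (W₀ \ Wseq n) := by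
      rw [hA, Set.diff_iInter]
    rw [hun]
    have hdir : Directed (· ⊆ ·) (fun n => W₀ \ Wseq n) := by
      apply Monotone.directed_le
      intro a b hab
      apply Set.diff_subset_diff_right
      -- Wseq b ⊆ Wseq a for a ≤ b
      induction hab with
      | refl => exact subset_rfl
      | step h ih => exact (hmono _).trans ih
    rw [hdir.measure_iUnion]
    apply iSup_le
    intro n
    exact le_trans (hloss n) (ENNReal.ofReal_le_ofReal (hsumhalf n))
  have hApos : 0 < μ A := by
    by_contra h
    push_neg at h
    have hA0 : μ A = 0 := le_antisymm h (by simp)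
    have hW0' : μ W₀ ≤ μ A + μ (W₀ \ A) := by
      calc μ W₀ ≤ μ (A ∪ (W₀ \ A)) := by
            apply measure_mono
            intro x hx
            rcases Classical.em (x ∈ A) with hxA | hxA
            · exact Or.inl hxA
            · exact Or.inr ⟨hx, hxA⟩
        _ ≤ μ A + μ (W₀ \ A) := measure_union_le _ _
    rw [hA0, zero_add] at hW0'
    have : ENNReal.ofReal c ≤ ENNReal.ofReal (c / 2) := by
      calc ENNReal.ofReal c = μ W₀ := ENNReal.ofReal_toReal hW₀fin.ne
        _ ≤ ENNReal.ofReal (c / 2) := le_trans hW0' hlossA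
    rw [ENNReal.ofReal_le_ofReal_iff (by positivity)] at this
    linarith
  refine ⟨A, hAm, hApos, ?_⟩
  intro n
  match n with
  | 0 =>
      refine ⟨1, one_pos, ?_⟩
      intro k hk1 hk2 j hj
      exfalso
      have : ((0 : ℕ) : ℤ) = 0 := rfl
      omega
  | (m + 1) =>
      refine ⟨Lf m (Wseq m), (h3 m (Wseq m) (hbasic m).1 (hbasic m).2), ?_⟩
      intro k hk1 hk2 j hj
      have hgap := h4 m (Wseq m) (hbasic m).1 (hbasic m).2 k hk1 hk2 j hj
      have hempty : ⇑(e ^ (k * Lf m (Wseq m) + j)) '' A ∩ A = ∅ := by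
        rw [Set.eq_empty_iff_forall_notMem]
        rintro y ⟨⟨x, hxA, rfl⟩, hyA⟩
        have hxW : x ∈ Wseq (m + 1) := hAsub (m + 1) hxA
        have hyW : (e ^ (k * Lf m (Wseq m) + j)) x ∈ Wseq (m + 1) := hAsub (m + 1) hyA
        rw [hsucc m] at hxW hyW
        exact hgap x hxW hyW
      rw [hempty]
      exact measure_empty
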